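/- Let $X_1, X_2, \ldots$ be i.i.d. 1-sub-Gaussian random variables with mean $\mu$ and let $\widehat{\gamma}_t = \mu - \frac{1}{t}\sum_{s=1}^t X_s$. Then for any $\epsilon > 0$ and integer $t \geq 1$, $\mathbb{E}\left[e^{t\widehat{\gamma}_t^2/3}\, \mathds{1}\{|\widehat{\gamma}_t| \geq \epsilon/3\}\right] \leq 6\, e^{-t\epsilon^2/54}$. -/

import Mathlib

open MeasureTheory ProbabilityTheory Real Set

private lemma aux_mgf {Ω : Type*} [MeasurableSpace Ω] (P : Measure Ω) [IsProbabilityMeasure P]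
    (X : ℕ → Ω → ℝ) (μ : ℝ)
    (hmeas : ∀ i, Measurable (X i))
    (hindep : iIndepFun X P)
    (hident : ∀ i, IdentDistrib (X i) (X 1) P P)
    (hsubg : ∀ l : ℝ, ∫ ω, Real.exp (l * (X 1 ω - μ)) ∂P ≤ Real.exp (l ^ 2 / 2))
    (γ : ℕ → Ω → ℝ) (hγ : ∀ s ω, γ s ω = μ - (1 / s) * ∑ u ∈ Finset.Icc 1 s, X u ω)
    (t : ℕ) (ht : 1 ≤ t) :
    ∀ l : ℝ, mgf (γ t) P l ≤ Real.exp (l ^ 2 / (2 * t)) := by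
  have hT : (1:ℝ) ≤ (t:ℝ) := by exact_mod_cast ht
  have hT0 : (0:ℝ) < (t:ℝ) := lt_of_lt_of_le one_pos hT
  have hmgfX : ∀ i, ∀ m : ℝ, mgf (X i) P m ≤ Real.exp (m * μ + m ^ 2 / 2) := by
    intro i m
    have heq : mgf (X i) P m = mgf (X 1) P m := by
      have h := ((hident i).comp (measurable_const_mul m).exp).integral_eq
      simpa [mgf, Function.comp] using h
    rw [heq]
    have h2 : (fun ω => Real.exp (m * X 1 ω))
        = fun ω => Real.exp (m * μ) * Real.exp (m * (X 1 ω - μ)) := by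
      funext ω; rw [← Real.exp_add]; ring_nf
    rw [mgf, h2, integral_const_mul, Real.exp_add]
    exact mul_le_mul_of_nonneg_left (hsubg m) (Real.exp_pos _).le
  intro l
  have hγt : γ t = fun ω => μ - (1 / (t:ℝ)) * ∑ u ∈ Finset.Icc 1 t, X u ω := funext (hγ t)
  have hsum : (fun ω => ∑ u ∈ Finset.Icc 1 t, X u ω) = ∑ u ∈ Finset.Icc 1 t, X u := by
    funext ω; simp [Finset.sum_apply]
  have hmgfS : mgf (∑ u ∈ Finset.Icc 1 t, X u) P (-(l / t))
      ≤ Real.exp (-(l * μ) + l ^ 2 / (2 * t)) := by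
    rw [hindep.mgf_sum hmeas]
    have hcard : (Finset.Icc 1 t).card = t := by simp
    calc ∏ i ∈ Finset.Icc 1 t, mgf (X i) P (-(l / t))
        ≤ ∏ _i ∈ Finset.Icc 1 t, Real.exp (-(l / t) * μ + (-(l / t)) ^ 2 / 2) :=
          Finset.prod_le_prod (fun i _ => mgf_nonneg) (fun i _ => hmgfX i _)
      _ = Real.exp (-(l / t) * μ + (-(l / t)) ^ 2 / 2) ^ t := by rw [Finset.prod_const, hcard]
      _ = Real.exp ((t : ℝ) * (-(l / t) * μ + (-(l / t)) ^ 2 / 2)) := by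
          rw [← Real.exp_nat_mul]
      _ = Real.exp (-(l * μ) + l ^ 2 / (2 * t)) := by
          congr 1; field_simp
  have hexpand : (fun ω => Real.exp (l * γ t ω))
      = fun ω => Real.exp (l * μ) * Real.exp (-(l / t) * (∑ u ∈ Finset.Icc 1 t, X u) ω) := by
    funext ω
    rw [← Real.exp_add, hγt]
    simp only [← hsum]
    congr 1
    field_simp
    ring
  rw [mgf, hexpand, integral_const_mul]
  calc Real.exp (l * μ) * ∫ ω, Real.exp (-(l / t) * (∑ u ∈ Finset.Icc 1 t, X u) ω) ∂P
      ≤ Real.exp (l * μ) * Real.exp (-(l * μ) + l ^ 2 / (2 * t)) :=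
        mul_le_mul_of_nonneg_left hmgfS (Real.exp_pos _).le
    _ = Real.exp (l ^ 2 / (2 * t)) := by rw [← Real.exp_add]; ring_nf

private lemma aux_tail {Ω : Type*} [MeasurableSpace Ω] (P : Measure Ω) [IsProbabilityMeasure P]
    (Z : Ω → ℝ) (t : ℕ) (hT0 : (0:ℝ) < (t:ℝ))
    (hmgf : ∀ l : ℝ, mgf Z P l ≤ Real.exp (l ^ 2 / (2 * t)))
    (hint : ∀ l : ℝ, Integrable (fun ω => Real.exp (l * Z ω)) P) :
    ∀ u : ℝ, 0 ≤ u → P {ω | u ≤ |Z ω|} ≤ ENNReal.ofReal (2 * Real.exp (-(t:ℝ) * u ^ 2 / 2)) := by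
  have hmgfneg : ∀ l : ℝ, mgf (-Z) P l ≤ Real.exp (l ^ 2 / (2 * t)) := by
    intro l
    rw [mgf_neg]
    simpa [neg_pow] using hmgf (-l)
  intro u hu
  have key : ∀ W : Ω → ℝ, (∀ l, mgf W P l ≤ Real.exp (l ^ 2 / (2 * t))) →
      (∀ l : ℝ, Integrable (fun ω => Real.exp (l * W ω)) P) →
      P {ω | u ≤ W ω} ≤ ENNReal.ofReal (Real.exp (-(t:ℝ) * u ^ 2 / 2)) := by
    intro W hW hWint
    have hch := measure_ge_le_exp_mul_mgf (X := W) (μ := P) (t := (t:ℝ) * u) u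
      (by positivity) (hWint _)
    have hbd : Real.exp (-((t:ℝ) * u) * u) * mgf W P ((t:ℝ) * u)
        ≤ Real.exp (-(t:ℝ) * u ^ 2 / 2) := by
      calc Real.exp (-((t:ℝ) * u) * u) * mgf W P ((t:ℝ) * u)
          ≤ Real.exp (-((t:ℝ) * u) * u) * Real.exp (((t:ℝ) * u) ^ 2 / (2 * t)) :=
            mul_le_mul_of_nonneg_left (hW _) (Real.exp_pos _).le
        _ = Real.exp (-(t:ℝ) * u ^ 2 / 2) := by
            rw [← Real.exp_add]; congr 1; field_simp; ring
    rw [← ENNReal.ofReal_toReal (measure_ne_top P _)]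
    exact ENNReal.ofReal_le_ofReal (hch.trans hbd)
  have h1 := key Z hmgf hint
  have h2 := key (-Z) hmgfneg (fun l => by simpa [neg_mul, mul_neg] using hint (-l))
  have hsub : {ω | u ≤ |Z ω|} ⊆ {ω | u ≤ Z ω} ∪ {ω | u ≤ (-Z) ω} := by
    intro ω hω
    rcases abs_cases (Z ω) with ⟨h, _⟩ | ⟨h, _⟩
    · left; simpa [h] using hω
    · right; simp only [Pi.neg_apply, Set.mem_setOf_eq]
      simpa [h] using hω
  calc P {ω | u ≤ |Z ω|} ≤ P ({ω | u ≤ Z ω} ∪ {ω | u ≤ (-Z) ω}) := measure_mono hsub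
    _ ≤ P {ω | u ≤ Z ω} + P {ω | u ≤ (-Z) ω} := measure_union_le _ _
    _ ≤ ENNReal.ofReal (Real.exp (-(t:ℝ) * u ^ 2 / 2))
        + ENNReal.ofReal (Real.exp (-(t:ℝ) * u ^ 2 / 2)) := add_le_add h1 h2
    _ = ENNReal.ofReal (2 * Real.exp (-(t:ℝ) * u ^ 2 / 2)) := by
        rw [← ENNReal.ofReal_add (Real.exp_pos _).le (Real.exp_pos _).le]; ring_nf

private lemma aux_layercake {Ω : Type*} [MeasurableSpace Ω] (P : Measure Ω)
    [IsProbabilityMeasure P]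
    (Z : Ω → ℝ) (hZmeas : Measurable Z) (t : ℕ) (hT0 : (0:ℝ) < (t:ℝ))
    (ε : ℝ) (hε : 0 < ε)
    (htail : ∀ u : ℝ, 0 ≤ u →
      P {ω | u ≤ |Z ω|} ≤ ENNReal.ofReal (2 * Real.exp (-(t:ℝ) * u ^ 2 / 2))) :
    ∫⁻ ω in {ω | ε / 3 ≤ |Z ω|}, ENNReal.ofReal (Real.exp ((t:ℝ) * Z ω ^ 2 / 3)) ∂P
      ≤ ENNReal.ofReal (6 * Real.exp (-(t:ℝ) * ε ^ 2 / 54)) := by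
  set A : Set Ω := {ω | ε / 3 ≤ |Z ω|} with hA
  have hAmeas : MeasurableSet A := measurableSet_le measurable_const hZmeas.abs
  set y₀ : ℝ := Real.exp ((t:ℝ) * ε ^ 2 / 27) with hy₀
  have hy₀pos : 0 < y₀ := Real.exp_pos _
  have hy₀one : 1 < y₀ := by
    rw [hy₀, show (1:ℝ) = Real.exp 0 by simp]
    apply Real.exp_lt_exp.2; positivity
  have hlc := lintegral_eq_lintegral_meas_lt (P.restrict A)
    (f := fun ω => Real.exp ((t:ℝ) * Z ω ^ 2 / 3))
    (ae_of_all _ fun ω => (Real.exp_pos _).le)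
    ((((hZmeas.pow_const 2).const_mul _).div_const 3).exp.aemeasurable)
  rw [hlc]
  have hsplit : Ioi (0:ℝ) = Ioc 0 y₀ ∪ Ioi y₀ := (Ioc_union_Ioi_eq_Ioi hy₀pos.le).symm
  rw [hsplit, lintegral_union measurableSet_Ioi (Ioc_disjoint_Ioi le_rfl)]
  have hPA : P A ≤ ENNReal.ofReal (2 * Real.exp (-(t:ℝ) * ε ^ 2 / 18)) := by
    have := htail (ε / 3) (by positivity)
    convert this using 3
    ring
  have part1 : ∫⁻ x in Ioc (0:ℝ) y₀,
      (P.restrict A) {ω | x < Real.exp ((t:ℝ) * Z ω ^ 2 / 3)} ∂volume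
      ≤ ENNReal.ofReal (2 * Real.exp (-(t:ℝ) * ε ^ 2 / 54)) := by
    calc ∫⁻ x in Ioc (0:ℝ) y₀, (P.restrict A) {ω | x < Real.exp ((t:ℝ) * Z ω ^ 2 / 3)} ∂volume
        ≤ ∫⁻ _x in Ioc (0:ℝ) y₀, ENNReal.ofReal (2 * Real.exp (-(t:ℝ) * ε ^ 2 / 18)) ∂volume := by
          refine lintegral_mono fun x => ?_
          refine le_trans ?_ hPA
          rw [Measure.restrict_apply' hAmeas]
          exact measure_mono inter_subset_right
      _ = ENNReal.ofReal (2 * Real.exp (-(t:ℝ) * ε ^ 2 / 18)) * volume (Ioc (0:ℝ) y₀) := by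
          rw [setLIntegral_const]
      _ = ENNReal.ofReal (2 * Real.exp (-(t:ℝ) * ε ^ 2 / 18)) * ENNReal.ofReal y₀ := by
          rw [Real.volume_Ioc, sub_zero]
      _ = ENNReal.ofReal (2 * Real.exp (-(t:ℝ) * ε ^ 2 / 54)) := by
          rw [← ENNReal.ofReal_mul (by positivity)]
          congr 1
          rw [hy₀, mul_assoc, ← Real.exp_add]
          congr 2
          ring
  have part2 : ∫⁻ x in Ioi y₀,
      (P.restrict A) {ω | x < Real.exp ((t:ℝ) * Z ω ^ 2 / 3)} ∂volume
      ≤ ENNReal.ofReal (4 * Real.exp (-(t:ℝ) * ε ^ 2 / 54)) := by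
    have hbound : ∀ x ∈ Ioi y₀,
        (P.restrict A) {ω | x < Real.exp ((t:ℝ) * Z ω ^ 2 / 3)}
          ≤ ENNReal.ofReal (2 * x ^ (-(3/2) : ℝ)) := by
      intro x hx
      have hx1 : 1 < x := hy₀one.trans hx
      have hxpos : 0 < x := zero_lt_one.trans hx1
      have hlogpos : 0 < Real.log x := Real.log_pos hx1
      set u : ℝ := Real.sqrt (3 * Real.log x / t) with hu
      have hupos : 0 ≤ u := Real.sqrt_nonneg _
      have hsubset : {ω | x < Real.exp ((t:ℝ) * Z ω ^ 2 / 3)} ⊆ {ω | u ≤ |Z ω|} := by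
        intro ω hω
        simp only [Set.mem_setOf_eq] at hω ⊢
        have hlog : Real.log x < (t:ℝ) * Z ω ^ 2 / 3 := by
          have := Real.log_lt_log hxpos hω
          rwa [Real.log_exp] at this
        have h1 : 3 * Real.log x / t ≤ Z ω ^ 2 := by
          rw [div_le_iff₀ hT0]
          nlinarith
        calc u ≤ Real.sqrt (Z ω ^ 2) := Real.sqrt_le_sqrt h1
          _ = |Z ω| := Real.sqrt_sq_eq_abs _
      have husq : u ^ 2 = 3 * Real.log x / t := Real.sq_sqrt (by positivity)
      calc (P.restrict A) {ω | x < Real.exp ((t:ℝ) * Z ω ^ 2 / 3)}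
          ≤ P {ω | u ≤ |Z ω|} := by
            rw [Measure.restrict_apply' hAmeas]
            exact measure_mono (inter_subset_left.trans hsubset)
        _ ≤ ENNReal.ofReal (2 * Real.exp (-(t:ℝ) * u ^ 2 / 2)) := htail u hupos
        _ = ENNReal.ofReal (2 * x ^ (-(3/2) : ℝ)) := by
            congr 1
            rw [husq, Real.rpow_def_of_pos hxpos]
            congr 1
            field_simp
    have hIntOn : IntegrableOn (fun x : ℝ => 2 * x ^ (-(3/2) : ℝ)) (Ioi y₀) volume :=
      (integrableOn_Ioi_rpow_of_lt (by norm_num) hy₀pos).const_mul 2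
    calc ∫⁻ x in Ioi y₀, (P.restrict A) {ω | x < Real.exp ((t:ℝ) * Z ω ^ 2 / 3)} ∂volume
        ≤ ∫⁻ x in Ioi y₀, ENNReal.ofReal (2 * x ^ (-(3/2) : ℝ)) ∂volume := by
          refine setLIntegral_mono
            (((show Measurable (fun x : ℝ => x ^ (-(3/2):ℝ)) by fun_prop).const_mul
              2).ennreal_ofReal) hbound
      _ = ENNReal.ofReal (∫ x in Ioi y₀, 2 * x ^ (-(3/2) : ℝ) ∂volume) := by
          rw [← ofReal_integral_eq_lintegral_ofReal hIntOn]
          filter_upwards [self_mem_ae_restrict measurableSet_Ioi] with x hx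
          have : (0:ℝ) < x := hy₀pos.trans hx
          positivity
      _ = ENNReal.ofReal (4 * Real.exp (-(t:ℝ) * ε ^ 2 / 54)) := by
          congr 1
          rw [MeasureTheory.integral_const_mul, integral_Ioi_rpow_of_lt (by norm_num) hy₀pos]
          have : y₀ ^ (-(3/2) + 1 : ℝ) = Real.exp (-(t:ℝ) * ε ^ 2 / 54) := by
            rw [hy₀, Real.rpow_def_of_pos (Real.exp_pos _), Real.log_exp]
            congr 1
            ring
          rw [this]
          norm_num
          ring_nf
  calc _ ≤ ENNReal.ofReal (2 * Real.exp (-(t:ℝ) * ε ^ 2 / 54))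
      + ENNReal.ofReal (4 * Real.exp (-(t:ℝ) * ε ^ 2 / 54)) := add_le_add part1 part2
    _ = ENNReal.ofReal (6 * Real.exp (-(t:ℝ) * ε ^ 2 / 54)) := by
      rw [← ENNReal.ofReal_add (by positivity) (by positivity)]
      ring_nf

theorem stmt_12 {Ω : Type*} [MeasurableSpace Ω] (P : Measure Ω) [IsProbabilityMeasure P]
    (X : ℕ → Ω → ℝ) (μ : ℝ)
    (hmeas : ∀ i, Measurable (X i))
    (hindep : iIndepFun X P)
    (hident : ∀ i, IdentDistrib (X i) (X 1) P P)
    (hsubg : ∀ l : ℝ, ∫ ω, Real.exp (l * (X 1 ω - μ)) ∂P ≤ Real.exp (l ^ 2 / 2))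
    (γ : ℕ → Ω → ℝ) (hγ : ∀ s ω, γ s ω = μ - (1 / s) * ∑ u ∈ Finset.Icc 1 s, X u ω)
    (ε : ℝ) (hε : 0 < ε) (t : ℕ) (ht : 1 ≤ t) :
    ∫ ω in {ω | ε / 3 ≤ |γ t ω|}, Real.exp ((t : ℝ) * (γ t ω) ^ 2 / 3) ∂P
      ≤ 6 * Real.exp (-(t : ℝ) * ε ^ 2 / 54) := by
  have hT : (1:ℝ) ≤ (t:ℝ) := by exact_mod_cast ht
  have hT0 : (0:ℝ) < (t:ℝ) := lt_of_lt_of_le one_pos hT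
  set Z : Ω → ℝ := γ t with hZ
  set A : Set Ω := {ω | ε / 3 ≤ |Z ω|} with hA
  have hZmeas : Measurable Z := by
    have hγt : Z = fun ω => μ - (1 / (t:ℝ)) * ∑ u ∈ Finset.Icc 1 t, X u ω := funext (hγ t)
    rw [hγt]
    exact measurable_const.sub
      ((Finset.measurable_sum _ fun i _ => hmeas i).const_mul _)
  have hAmeas : MeasurableSet A := measurableSet_le measurable_const hZmeas.abs
  set f : Ω → ℝ := fun ω => Real.exp ((t:ℝ) * Z ω ^ 2 / 3) with hf
  have hfmeas : Measurable f := (((hZmeas.pow_const 2).const_mul _).div_const 3).exp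
  by_cases hInt : IntegrableOn f A P
  · -- main case
    have hfint : Integrable f P := by
      have hcompl : IntegrableOn f Aᶜ P := by
        refine (integrable_const (Real.exp ((t:ℝ) * (ε/3) ^ 2 / 3))).mono'
          hfmeas.aestronglyMeasurable.restrict ?_
        filter_upwards [self_mem_ae_restrict hAmeas.compl] with ω hω
        have hlt : |Z ω| < ε / 3 := by
          simpa [A, not_le] using hω
        have hsq : Z ω ^ 2 ≤ (ε / 3) ^ 2 := by
          have := abs_nonneg (Z ω)
          nlinarith [sq_abs (Z ω)]
        rw [Real.norm_eq_abs, abs_of_pos (Real.exp_pos _)]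
        apply Real.exp_le_exp.2
        have : (t:ℝ) * Z ω ^ 2 ≤ (t:ℝ) * (ε/3) ^ 2 := by nlinarith
        linarith
      have := hInt.union hcompl
      rwa [Set.union_compl_self, integrableOn_univ] at this
    have hZint : ∀ l : ℝ, Integrable (fun ω => Real.exp (l * Z ω)) P := by
      intro l
      refine (hfint.const_mul (Real.exp (3 * l ^ 2 / (4 * t)))).mono'
        ((hZmeas.const_mul l).exp.aestronglyMeasurable) (ae_of_all _ fun ω => ?_)
      rw [Real.norm_eq_abs, abs_of_pos (Real.exp_pos _), hf, ← Real.exp_add]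
      apply Real.exp_le_exp.2
      have h := sq_nonneg (2 * (t:ℝ) * Z ω - 3 * l)
      rw [div_add_div _ _ (by positivity) (by norm_num : (3:ℝ) ≠ 0)]
      rw [le_div_iff₀ (by positivity)]
      nlinarith
    have hmgf := aux_mgf P X μ hmeas hindep hident hsubg γ hγ t ht
    have htail := aux_tail P Z t hT0 hmgf hZint
    have hlayer := aux_layercake P Z hZmeas t hT0 ε hε htail
    have hposae : 0 ≤ᵐ[P.restrict A] f := ae_of_all _ fun ω => (Real.exp_pos _).le
    have heq : ∫ ω in A, f ω ∂P
        = (∫⁻ ω in A, ENNReal.ofReal (f ω) ∂P).toReal :=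
      integral_eq_lintegral_of_nonneg_ae hposae hfmeas.aestronglyMeasurable.restrict
    calc ∫ ω in A, f ω ∂P
        = (∫⁻ ω in A, ENNReal.ofReal (f ω) ∂P).toReal := heq
      _ ≤ 6 * Real.exp (-(t : ℝ) * ε ^ 2 / 54) :=
          ENNReal.toReal_le_of_le_ofReal (by positivity) hlayer
  · rw [integral_undef hInt]
    positivity
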